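/- Let q, c, l₀ be real numbers with 0 < q < 1, c ≥ 0, l₀ ≥ 0, let l = l₀ + n for some n ∈ ℕ, and let ε ∈ {+1, −1}. Set λ := q − q^{−1}, [x] := (q^x − q^{−x})/(q − q^{−1}) for real x, λ_ε := 1/2 + ε(c + 1/4)^{1/2}, λ_{−ε} := 1/2 − ε(c + 1/4)^{1/2}, and β := [2l+2]^{−1}([2l₀](q^{−2} λ_ε − λ_{−ε}) − (1 − q^{−2})[l−l₀][l+l₀+1]). Then [2][2l+2][2l+3]^{−1} (c + 1/4 − ((1 + q^{−2})^{−1}(1 − β) − 1/2)²) = [2]^{1}[2l+3]^{−1}[2l+2]^{−1} ([2l+2]²(c + 1/4) − (−(λ/2)[l−l₀+1][l+l₀+1] + ε[2l₀](c + 1/4)^{1/2})²). -/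

import Mathlib

set_option maxHeartbeats 2000000 in
/-- With `[x] = (qˣ − q⁻ˣ)/(q − q⁻¹)`, `λ = q − q⁻¹`, `λ_ε = 1/2 + ε (c + 1/4)^{1/2}`,
`λ_{−ε} = 1/2 − ε (c + 1/4)^{1/2}`, `l = l₀ + n` and
`β = [2l+2]⁻¹ ([2l₀](q⁻² λ_ε − λ_{−ε}) − (1 − q⁻²)[l−l₀][l+l₀+1])`, one has
`[2][2l+2][2l+3]⁻¹ (c + 1/4 − ((1 + q⁻²)⁻¹ (1 − β) − 1/2)²)
  = [2][2l+3]⁻¹[2l+2]⁻¹ ([2l+2]² (c + 1/4)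
      − (−(λ/2)[l−l₀+1][l+l₀+1] + ε [2l₀](c + 1/4)^{1/2})²)`. -/
theorem alpha_plus_squared_formula
    (q c l₀ : ℝ) (hq0 : 0 < q) (hq1 : q < 1) (hc : 0 ≤ c) (hl₀ : 0 ≤ l₀)
    (n : ℕ) (l : ℝ) (hl : l = l₀ + n)
    (ε : ℝ) (hε : ε = 1 ∨ ε = -1)
    (qn : ℝ → ℝ) (hqn : ∀ x : ℝ, qn x = (q ^ x - q ^ (-x)) / (q - q⁻¹))
    (le lme β : ℝ)
    (hle : le = 1 / 2 + ε * Real.sqrt (c + 1 / 4))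
    (hlme : lme = 1 / 2 - ε * Real.sqrt (c + 1 / 4))
    (hβ : β = (qn (2 * l + 2))⁻¹ * (qn (2 * l₀) * ((q ^ 2)⁻¹ * le - lme)
      - (1 - (q ^ 2)⁻¹) * qn (l - l₀) * qn (l + l₀ + 1))) :
    qn 2 * qn (2 * l + 2) * (qn (2 * l + 3))⁻¹
        * (c + 1 / 4 - ((1 + (q ^ 2)⁻¹)⁻¹ * (1 - β) - 1 / 2) ^ 2)
      = qn 2 * (qn (2 * l + 3))⁻¹ * (qn (2 * l + 2))⁻¹
        * ((qn (2 * l + 2)) ^ 2 * (c + 1 / 4)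
          - (-((q - q⁻¹) / 2) * qn (l - l₀ + 1) * qn (l + l₀ + 1)
            + ε * qn (2 * l₀) * Real.sqrt (c + 1 / 4)) ^ 2) := by
  have hl0 : 0 ≤ l := by rw [hl]; positivity
  have hε2 : ε ^ 2 = 1 := by rcases hε with h | h <;> rw [h] <;> norm_num
  have hc4 : (0:ℝ) ≤ c + 1/4 := by linarith
  -- make t = ε √(c+1/4) opaque
  obtain ⟨t, ht⟩ : ∃ t : ℝ, ε * Real.sqrt (c + 1/4) = t := ⟨_, rfl⟩
  have ht2 : t ^ 2 = c + 1/4 := by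
    rw [← ht, mul_pow, hε2, one_mul, Real.sq_sqrt hc4]
  have hεs : ε * qn (2 * l₀) * Real.sqrt (c + 1/4) = qn (2 * l₀) * t := by
    rw [← ht]; ring
  rw [hεs, ← ht2]
  -- rpow arithmetic
  have E : ∀ x y : ℝ, q ^ (x + y) = q ^ x * q ^ y := fun x y => Real.rpow_add hq0 x y
  have EN : ∀ x : ℝ, q ^ (-x) = (q ^ x)⁻¹ := fun x => Real.rpow_neg hq0.le x
  obtain ⟨a, ha⟩ : ∃ a : ℝ, q ^ (l : ℝ) = a := ⟨_, rfl⟩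
  obtain ⟨b, hb⟩ : ∃ b : ℝ, q ^ (l₀ : ℝ) = b := ⟨_, rfl⟩
  have p1 : q ^ (1:ℝ) = q := Real.rpow_one q
  have p2 : q ^ (2:ℝ) = q * q := by
    rw [show (2:ℝ) = 1 + 1 by norm_num, E, p1]
  have p2l2 : q ^ (2*l+2 : ℝ) = a * a * q * q := by
    rw [show (2*l+2:ℝ) = l + l + 1 + 1 by ring, E, E, E, p1, ha]
  have p2l3 : q ^ (2*l+3 : ℝ) = a * a * q * q * q := by
    rw [show (2*l+3:ℝ) = l + l + 1 + 1 + 1 by ring, E, E, E, E, p1, ha]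
  have p2l0 : q ^ (2*l₀ : ℝ) = b * b := by
    rw [show (2*l₀:ℝ) = l₀ + l₀ by ring, E, hb]
  have pml : q ^ (l - l₀ : ℝ) = a * b⁻¹ := by
    rw [show (l - l₀:ℝ) = l + -l₀ by ring, E, EN, ha, hb]
  have ppl : q ^ (l + l₀ + 1 : ℝ) = a * b * q := by
    rw [E, E, p1, ha, hb]
  have pml1 : q ^ (l - l₀ + 1 : ℝ) = a * b⁻¹ * q := by
    rw [show (l - l₀ + 1:ℝ) = l + -l₀ + 1 by ring, E, E, EN, p1, ha, hb]
  -- positivity / nonzeroness facts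
  have hqne : q ≠ 0 := hq0.ne'
  have ha0 : 0 < a := ha ▸ Real.rpow_pos_of_pos hq0 l
  have hb0 : 0 < b := hb ▸ Real.rpow_pos_of_pos hq0 l₀
  have ha1 : a ≤ 1 := ha ▸ Real.rpow_le_one hq0.le hq1.le hl0
  have inv_gt : ∀ x : ℝ, 0 < x → x < 1 → 1 < x⁻¹ := by
    intro x h0 h1
    have h2 := mul_inv_cancel₀ h0.ne'
    nlinarith [inv_pos.mpr h0]
  have hqi : 1 < q⁻¹ := inv_gt q hq0 hq1
  have hlam : q - q⁻¹ ≠ 0 := by nlinarith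
  have haa : a * a ≤ 1 := by nlinarith
  have hqq : q * q < 1 := by nlinarith
  have g1 : a * a * q * q < 1 := by nlinarith [mul_pos hq0 hq0]
  have g1' : 0 < a * a * q * q := by positivity
  have g2 : a * a * q * q * q < 1 := by nlinarith
  have g2' : 0 < a * a * q * q * q := by positivity
  have hx1 : a * a * q * q - (a * a * q * q)⁻¹ ≠ 0 := by
    have := inv_gt _ g1' g1; nlinarith
  have hx2 : a * a * q * q * q - (a * a * q * q * q)⁻¹ ≠ 0 := by
    have := inv_gt _ g2' g2; nlinarith
  have h1q : (1 + (q^2)⁻¹) ≠ 0 := by positivity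
  have hq2 : q^2 - 1 ≠ 0 := by nlinarith
  have hA4 : a^4*q^4 - 1 ≠ 0 := by nlinarith [pow_pos ha0 4, pow_pos hq0 4, sq_nonneg (a*q), sq_nonneg (a*a*q*q)]
  have hA6 : a^4*q^6 - 1 ≠ 0 := by nlinarith [pow_pos ha0 4, pow_pos hq0 6, sq_nonneg (a*a*q*q*q)]
  have hane : a ≠ 0 := ha0.ne'
  have hbne : b ≠ 0 := hb0.ne'
  -- clean fraction forms of the q-numbers
  have r2 : qn 2 = (q^2 + 1)/q := by
    rw [hqn, EN, p2, div_eq_div_iff hlam hqne]; field_simp; ring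
  have rN : qn (2*l+2) = (a^4*q^4 - 1)/(a^2*q*(q^2-1)) := by
    rw [hqn, EN, p2l2, div_eq_div_iff hlam (mul_ne_zero (mul_ne_zero (pow_ne_zero 2 hane) hqne) hq2)]
    field_simp
  have rM : qn (2*l+3) = (a^4*q^6 - 1)/(a^2*q^2*(q^2-1)) := by
    rw [hqn, EN, p2l3, div_eq_div_iff hlam (mul_ne_zero (mul_ne_zero (pow_ne_zero 2 hane) (pow_ne_zero 2 hqne)) hq2)]
    field_simp
  have r0 : qn (2*l₀) = q*(b^4 - 1)/(b^2*(q^2-1)) := by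
    rw [hqn, EN, p2l0, div_eq_div_iff hlam (mul_ne_zero (pow_ne_zero 2 hbne) hq2)]
    field_simp
  have rm : qn (l - l₀) = q*(a^2 - b^2)/(a*b*(q^2-1)) := by
    rw [hqn, EN, pml, div_eq_div_iff hlam (mul_ne_zero (mul_ne_zero hane hbne) hq2)]
    field_simp
  have rp : qn (l + l₀ + 1) = (a^2*b^2*q^2 - 1)/(a*b*(q^2-1)) := by
    rw [hqn, EN, ppl, div_eq_div_iff hlam (mul_ne_zero (mul_ne_zero hane hbne) hq2)]
    field_simp
  have rm1 : qn (l - l₀ + 1) = (a^2*q^2 - b^2)/(a*b*(q^2-1)) := by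
    rw [hqn, EN, pml1, div_eq_div_iff hlam (mul_ne_zero (mul_ne_zero hane hbne) hq2)]
    field_simp
  have hN : qn (2*l+2) ≠ 0 := by
    rw [rN]
    exact div_ne_zero hA4 (by positivity)
  have hM : qn (2*l+3) ≠ 0 := by
    rw [rM]
    exact div_ne_zero hA6 (by positivity)
  -- key identity
  have key : qn (2*l+2) * ((1 + (q ^ 2)⁻¹)⁻¹ * (1 - β) - 1 / 2)
      = -(-((q - q⁻¹) / 2) * qn (l - l₀ + 1) * qn (l + l₀ + 1) + qn (2 * l₀) * t) := by
    rw [hβ, hle, hlme, ht]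
    simp only [r2, rN, rM, r0, rm, rp, rm1]
    field_simp
    ring
  -- conclude
  calc qn 2 * qn (2 * l + 2) * (qn (2 * l + 3))⁻¹
        * (t ^ 2 - ((1 + (q ^ 2)⁻¹)⁻¹ * (1 - β) - 1 / 2) ^ 2)
      = qn 2 * (qn (2 * l + 3))⁻¹ * (qn (2 * l + 2))⁻¹
        * ((qn (2 * l + 2)) ^ 2 * t ^ 2
          - (qn (2*l+2) * ((1 + (q ^ 2)⁻¹)⁻¹ * (1 - β) - 1 / 2)) ^ 2) := by
        field_simp
    _ = qn 2 * (qn (2 * l + 3))⁻¹ * (qn (2 * l + 2))⁻¹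
        * ((qn (2 * l + 2)) ^ 2 * t ^ 2
          - (-((q - q⁻¹) / 2) * qn (l - l₀ + 1) * qn (l + l₀ + 1)
            + qn (2 * l₀) * t) ^ 2) := by rw [key]; ring_nf
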